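/- For t ≥ 1, with E_i the subspace of F_q^{n₁+⋯+n_t} spanned by the last n_i+⋯+n_t standard basis vectors (2 ≤ i ≤ t), the set of subspaces P with dim P = k₁ and dim(P ∩ E_i) = k_i for all 2 ≤ i ≤ t is non-empty if and only if 0 ≤ k_i − k_{i+1} ≤ n_i for 1 ≤ i ≤ t−1 and 0 ≤ k_t ≤ n_t; in that case its cardinality equals [n_t choose k_t]_q · ∏_{j=1}^{t−1} q^{(k_j−k_{j+1})(n_{j+1}+⋯+n_t−k_{j+1})} [n_j choose k_j−k_{j+1}]_q. -/

import Mathlib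

/-- Gaussian binomial coefficient, via the q-Pascal recursion. -/
def gaussBinom (q : ℕ) : ℕ → ℕ → ℕ
  | _, 0 => 1
  | 0, _ + 1 => 0
  | m + 1, i + 1 => gaussBinom q m i + q ^ (i + 1) * gaussBinom q m (i + 1)

/-- The subspace of `F^N` spanned by the standard basis vectors `e_j` with `c ≤ j`
(0-indexed), i.e. by the last `N - c` standard basis vectors. -/
def lastSpan (F : Type) [Field F] (N c : ℕ) : Submodule F (Fin N → F) :=
  Submodule.span F {v | ∃ j : Fin N, c ≤ (j : ℕ) ∧ v = Pi.single j 1}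

/-- `P` is a subspace of type `(k 0, k 1, …, k (t-1))` of `F_q^{n 0 + ⋯ + n (t-1)}`:
`dim P = k 0` and `dim (P ⊓ E_i) = k i` for `1 ≤ i ≤ t - 1`, where `E_i` is spanned by
the last `n i + ⋯ + n (t-1)` standard basis vectors. -/
def IsTypeP (F : Type) [Field F] (t : ℕ) (n k : ℕ → ℕ)
    (P : Submodule F (Fin (∑ m ∈ Finset.range t, n m) → F)) : Prop :=
  Module.finrank F P = k 0 ∧
    ∀ i, 1 ≤ i → i < t →
      Module.finrank F
        ↥(P ⊓ lastSpan F (∑ m ∈ Finset.range t, n m) (∑ j ∈ Finset.range i, n j)) = k i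

set_option linter.unusedSectionVars false

open Module Submodule

theorem gaussBinom_zero_right (q n : ℕ) : gaussBinom q n 0 = 1 := by cases n <;> rfl

theorem gaussBinom_eq_zero (q : ℕ) {n : ℕ} : ∀ {k : ℕ}, n < k → gaussBinom q n k = 0 := by
  induction n with
  | zero => intro k h; match k with
    | i + 1 => rfl
  | succ m ih =>
    intro k h
    match k with
    | i + 1 =>
      have h1 : gaussBinom q m i = 0 := ih (by omega)
      have h2 : gaussBinom q m (i+1) = 0 := ih (by omega)
      simp only [gaussBinom, h1, h2, mul_zero, add_zero]

theorem gaussBinom_pos (q : ℕ) {n : ℕ} : ∀ {k : ℕ}, k ≤ n → 0 < gaussBinom q n k := by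
  induction n with
  | zero => intro k h; match k with
    | 0 => norm_num [gaussBinom]
  | succ m ih =>
    intro k h
    match k with
    | 0 => norm_num [gaussBinom_zero_right]
    | i + 1 => have := ih (k := i) (by omega); simp only [gaussBinom]; omega

section
variable {F : Type} [Field F] [Fintype F]

theorem card_module (X : Type) [AddCommGroup X] [Module F X] [FiniteDimensional F X] :
    Nat.card X = Fintype.card F ^ finrank F X := by
  rw [Nat.card_congr (Module.finBasis F X).equivFun.toEquiv, Nat.card_pi]
  simp [Nat.card_eq_fintype_card]

theorem card_split {α : Type} [Finite α] (p q : α → Prop) :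
    Nat.card {x // p x} = Nat.card {x // p x ∧ q x} + Nat.card {x // p x ∧ ¬ q x} := by
  classical
  rw [← Nat.card_sum]
  refine Nat.card_congr ?_
  exact ((Equiv.sumCompl (fun x : {x // p x} => q x.1)).symm.trans
    (Equiv.sumCongr (Equiv.subtypeSubtypeEquivSubtypeInter p q)
      (Equiv.subtypeSubtypeEquivSubtypeInter p (fun x => ¬ q x))))

theorem card_sigma_const {ι : Type} [Finite ι] (β : ι → Type) [∀ i, Finite (β i)] (c : ℕ)
    (h : ∀ i, Nat.card (β i) = c) : Nat.card (Σ i, β i) = Nat.card ι * c := by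
  classical
  cases nonempty_fintype ι
  haveI : ∀ i, Fintype (β i) := fun i => Fintype.ofFinite _
  rw [Nat.card_eq_fintype_card, Fintype.card_sigma, Nat.card_eq_fintype_card]
  rw [Finset.sum_congr rfl (fun i _ => by rw [← Nat.card_eq_fintype_card, h i]),
    Finset.sum_const, smul_eq_mul]
  rfl

omit [Fintype F] in
theorem card_submodule_congr {V W : Type} [AddCommGroup V] [Module F V] [AddCommGroup W] [Module F W]
    (e : V ≃ₗ[F] W) (p : Submodule F V → Prop) (p' : Submodule F W → Prop)
    (hp : ∀ P : Submodule F V, p P ↔ p' (P.map (e : V →ₗ[F] W))) :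
    Nat.card {P : Submodule F V // p P} = Nat.card {P : Submodule F W // p' P} :=
  Nat.card_congr ((Submodule.orderIsoMapComap e).toEquiv.subtypeEquiv hp)

end


section
variable {F : Type} [Field F] {V : Type} [AddCommGroup V] [Module F V]

theorem finrank_comap_subtype (p q' : Submodule F V) :
    finrank F ↥(comap p.subtype q') = finrank F ↥(q' ⊓ p) := by
  have h : comap p.subtype q' = comap p.subtype (q' ⊓ p) := by
    ext x; simp [x.2]
  rw [h]
  exact (Submodule.comapSubtypeEquivOfLe inf_le_right).finrank_eq

variable [FiniteDimensional F V]

theorem finrank_map_mkQ_add (E P : Submodule F V) :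
    finrank F ↥(map E.mkQ P) + finrank F ↥(P ⊓ E) = finrank F ↥P := by
  have h1 := LinearMap.finrank_range_add_finrank_ker (E.mkQ.domRestrict P)
  rwa [LinearMap.range_domRestrict, LinearMap.ker_domRestrict, Submodule.ker_mkQ,
    finrank_comap_subtype, inf_comm] at h1

theorem finrank_comap_mkQ (E : Submodule F V) (W : Submodule F (V ⧸ E)) :
    finrank F ↥(comap E.mkQ W) = finrank F ↥W + finrank F ↥E := by
  have h1 := finrank_map_mkQ_add E (comap E.mkQ W)
  have h2 : map E.mkQ (comap E.mkQ W) = W := by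
    rw [Submodule.map_comap_eq, Submodule.range_mkQ, top_inf_eq]
  have h3 : comap E.mkQ W ⊓ E = E := by
    rw [inf_eq_right]
    intro x hx
    simp [Submodule.mem_comap, (Submodule.Quotient.mk_eq_zero E).2 hx, Submodule.mkQ_apply]
  rw [h2, h3] at h1
  omega

theorem card_sup_eq (E : Submodule F V) {d : ℕ} (hd : finrank F ↥E ≤ d) :
    Nat.card {P : Submodule F V // finrank F ↥P = d ∧ E ≤ P} =
      Nat.card {W : Submodule F (V ⧸ E) // finrank F ↥W = d - finrank F ↥E} := by
  refine Nat.card_congr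
    { toFun := fun P => ⟨map E.mkQ P.1, by
        obtain ⟨P, hP, hEP⟩ := P
        have h1 := finrank_map_mkQ_add E P
        rw [inf_eq_right.2 hEP] at h1
        simp only
        omega⟩
      invFun := fun W => ⟨comap E.mkQ W.1, by
        constructor
        · rw [finrank_comap_mkQ]; have := W.2; omega
        · intro x hx
          simp only [Submodule.mem_comap]
          have : E.mkQ x = 0 := (Submodule.Quotient.mk_eq_zero E).2 hx
          rw [this]; exact zero_mem _⟩
      left_inv := by
        rintro ⟨P, hP, hEP⟩
        refine Subtype.ext ?_
        simp only
        rw [Submodule.comap_map_eq, Submodule.ker_mkQ, sup_eq_left.2 hEP]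
      right_inv := by
        rintro ⟨W, hW⟩
        refine Subtype.ext ?_
        simp only
        rw [Submodule.map_comap_eq, Submodule.range_mkQ, top_inf_eq] }

end


section
variable {F : Type} [Field F] {V : Type} [AddCommGroup V] [Module F V]


variable (E P' : Submodule F V)

noncomputable def secE : (V ⧸ E) →ₗ[F] V :=
  Classical.choose ((E.mkQ).exists_rightInverse_of_surjective (Submodule.range_mkQ E))

lemma secE_prop (x : V ⧸ E) : E.mkQ (secE E x) = x := by
  have h := Classical.choose_spec ((E.mkQ).exists_rightInverse_of_surjective (Submodule.range_mkQ E))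
  exact DFunLike.congr_fun h x

lemma sub_secE_mem (v : V) : v - secE E (E.mkQ v) ∈ E := by
  have h : E.mkQ (v - secE E (E.mkQ v)) = 0 := by rw [map_sub, secE_prop, sub_self]
  rwa [Submodule.mkQ_apply, Submodule.Quotient.mk_eq_zero] at h

noncomputable def alphaE : V →ₗ[F] ↥E :=
  LinearMap.codRestrict E (LinearMap.id - (secE E) ∘ₗ E.mkQ) (fun v => by simpa using sub_secE_mem E v)

lemma alphaE_apply (v : V) : (alphaE E v : V) = v - secE E (E.mkQ v) := rfl

lemma alphaE_mem (v : ↥E) : alphaE E ↑v = v := by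
  apply Subtype.ext
  rw [alphaE_apply]
  have h0 : E.mkQ ↑v = 0 := (Submodule.Quotient.mk_eq_zero E).2 v.2
  rw [h0, map_zero, sub_zero]

noncomputable def gAux (W : Submodule F (V ⧸ E)) (f : ↥W →ₗ[F] (↥E ⧸ P'.comap E.subtype)) :
    ↥(comap E.mkQ W) →ₗ[F] (↥E ⧸ P'.comap E.subtype) :=
  ((P'.comap E.subtype).mkQ ∘ₗ (alphaE E) ∘ₗ (comap E.mkQ W).subtype) -
    (f ∘ₗ ((E.mkQ).restrict (p := comap E.mkQ W) (q := W) (fun _ hx => hx)))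

noncomputable def phiAux (W : Submodule F (V ⧸ E)) (f : ↥W →ₗ[F] (↥E ⧸ P'.comap E.subtype)) :
    Submodule F V :=
  map (comap E.mkQ W).subtype (LinearMap.ker (gAux E P' W f))

lemma mem_phiAux {W : Submodule F (V ⧸ E)} {f : ↥W →ₗ[F] (↥E ⧸ P'.comap E.subtype)} {x : V} :
    x ∈ phiAux E P' W f ↔
      ∃ hx : E.mkQ x ∈ W, (P'.comap E.subtype).mkQ (alphaE E x) = f ⟨E.mkQ x, hx⟩ := by
  simp only [phiAux, Submodule.mem_map, LinearMap.mem_ker, gAux, LinearMap.sub_apply,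
    LinearMap.comp_apply, Submodule.subtype_apply, LinearMap.restrict_apply, sub_eq_zero]
  constructor
  · rintro ⟨⟨y, hy⟩, hker, rfl⟩
    exact ⟨hy, hker⟩
  · rintro ⟨hx, hfx⟩
    exact ⟨⟨x, hx⟩, hfx, rfl⟩

lemma phiAux_inf (hP'E : P' ≤ E) (W : Submodule F (V ⧸ E))
    (f : ↥W →ₗ[F] (↥E ⧸ P'.comap E.subtype)) :
    phiAux E P' W f ⊓ E = P' := by
  ext z
  simp only [Submodule.mem_inf, mem_phiAux]
  constructor
  · rintro ⟨⟨hz1, hz2⟩, hzE⟩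
    have h0 : E.mkQ z = 0 := (Submodule.Quotient.mk_eq_zero E).2 hzE
    have hf0 : f ⟨E.mkQ z, hz1⟩ = 0 := by
      have : (⟨E.mkQ z, hz1⟩ : ↥W) = 0 := Subtype.ext h0
      rw [this, map_zero]
    rw [hf0] at hz2
    have hα : alphaE E z = ⟨z, hzE⟩ := by
      have : alphaE E (↑(⟨z, hzE⟩ : ↥E)) = ⟨z, hzE⟩ := alphaE_mem E _
      exact this
    rw [hα] at hz2
    have := (Submodule.Quotient.mk_eq_zero (P'.comap E.subtype)).1 (by rw [← Submodule.mkQ_apply]; exact hz2)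
    simpa using this
  · intro hz
    have hzE : z ∈ E := hP'E hz
    have h0 : E.mkQ z = 0 := (Submodule.Quotient.mk_eq_zero E).2 hzE
    refine ⟨⟨h0 ▸ W.zero_mem, ?_⟩, hzE⟩
    have hf0 : f ⟨E.mkQ z, h0 ▸ W.zero_mem⟩ = 0 := by
      have : (⟨E.mkQ z, h0 ▸ W.zero_mem⟩ : ↥W) = 0 := Subtype.ext h0
      rw [this, map_zero]
    rw [hf0]
    have hα : alphaE E z = ⟨z, hzE⟩ := alphaE_mem E ⟨z, hzE⟩
    rw [hα, Submodule.mkQ_apply, Submodule.Quotient.mk_eq_zero]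
    simpa using hz

variable [FiniteDimensional F V]

lemma gAux_surjective (W : Submodule F (V ⧸ E)) (f : ↥W →ₗ[F] (↥E ⧸ P'.comap E.subtype)) :
    LinearMap.range (gAux E P' W f) = ⊤ := by
  rw [LinearMap.range_eq_top]
  intro z
  obtain ⟨u, rfl⟩ := Submodule.mkQ_surjective (P'.comap E.subtype) z
  have hmem : (↑u : V) ∈ comap E.mkQ W := by
    have h0 : E.mkQ ↑u = 0 := (Submodule.Quotient.mk_eq_zero E).2 u.2
    simp only [Submodule.mem_comap, h0]
    exact W.zero_mem
  refine ⟨⟨↑u, hmem⟩, ?_⟩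
  show (P'.comap E.subtype).mkQ (alphaE E ↑u) - f ⟨E.mkQ ↑u, hmem⟩
      = (P'.comap E.subtype).mkQ u
  have h0 : E.mkQ ↑u = 0 := (Submodule.Quotient.mk_eq_zero E).2 u.2
  rw [alphaE_mem E u, show (⟨E.mkQ ↑u, hmem⟩ : ↥W) = 0 from Subtype.ext h0, map_zero, sub_zero]

lemma finrank_quot_aux (hP'E : P' ≤ E) :
    finrank F (↥E ⧸ P'.comap E.subtype) = finrank F ↥E - finrank F ↥P' := by
  have h1 := Submodule.finrank_quotient_add_finrank (P'.comap E.subtype)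
  rw [finrank_comap_subtype, inf_eq_left.2 hP'E] at h1
  omega

lemma finrank_phiAux (hP'E : P' ≤ E) (W : Submodule F (V ⧸ E))
    (f : ↥W →ₗ[F] (↥E ⧸ P'.comap E.subtype)) :
    finrank F ↥(phiAux E P' W f) = finrank F ↥W + finrank F ↥P' := by
  have h1 := LinearMap.finrank_range_add_finrank_ker (gAux E P' W f)
  rw [gAux_surjective, finrank_top] at h1
  have h2 : finrank F ↥(comap E.mkQ W) = finrank F ↥W + finrank F ↥E := finrank_comap_mkQ E W
  have h3 : finrank F ↥P' ≤ finrank F ↥E := Submodule.finrank_mono hP'E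
  have h4 := finrank_quot_aux E P' hP'E
  rw [phiAux, finrank_map_subtype_eq]
  omega

lemma map_mkQ_phiAux (hP'E : P' ≤ E) (W : Submodule F (V ⧸ E))
    (f : ↥W →ₗ[F] (↥E ⧸ P'.comap E.subtype)) :
    map E.mkQ (phiAux E P' W f) = W := by
  have hle : map E.mkQ (phiAux E P' W f) ≤ W := by
    rintro w ⟨x, hx, rfl⟩
    exact ((mem_phiAux E P').1 hx).1
  refine eq_of_le_of_finrank_eq hle ?_
  have h1 := finrank_map_mkQ_add E (phiAux E P' W f)
  rw [phiAux_inf E P' hP'E, finrank_phiAux E P' hP'E] at h1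
  omega

end

set_option maxHeartbeats 1000000 in
theorem fiber_card {F : Type} [Field F] [Fintype F] {V : Type} [AddCommGroup V] [Module F V]
    [FiniteDimensional F V] (E P' : Submodule F V) (hP'E : P' ≤ E) {d : ℕ}
    (hed : finrank F ↥P' ≤ d) :
    Nat.card {P : Submodule F V // finrank F ↥P = d ∧ P ⊓ E = P'} =
      Nat.card {W : Submodule F (V ⧸ E) // finrank F ↥W = d - finrank F ↥P'} *
        Fintype.card F ^ ((d - finrank F ↥P') * (finrank F ↥E - finrank F ↥P')) := by
  classical
  haveI : Finite V := Module.finite_of_finite F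
  haveI : Finite (V ⧸ E) := Finite.of_surjective _ (Submodule.mkQ_surjective E)
  haveI : Finite (↥E ⧸ P'.comap E.subtype) :=
    Finite.of_surjective _ (Submodule.mkQ_surjective (P'.comap E.subtype))
  set e := finrank F ↥P' with he
  set ψ : (Σ W : {W : Submodule F (V ⧸ E) // finrank F ↥W = d - e},
      (↥W.1 →ₗ[F] (↥E ⧸ P'.comap E.subtype))) →
      {P : Submodule F V // finrank F ↥P = d ∧ P ⊓ E = P'} :=
    fun a => ⟨phiAux E P' a.1.1 a.2,
      by rw [finrank_phiAux E P' hP'E, a.1.2]; omega,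
      phiAux_inf E P' hP'E _ _⟩ with hψ
  have hinj : Function.Injective ψ := by
    rintro ⟨⟨W₁, hW₁⟩, f₁⟩ ⟨⟨W₂, hW₂⟩, f₂⟩ hab
    simp only [hψ, Subtype.mk.injEq] at hab
    have hW : W₁ = W₂ := by
      rw [← map_mkQ_phiAux E P' hP'E W₁ f₁, hab, map_mkQ_phiAux E P' hP'E W₂ f₂]
    subst hW
    have hf : f₁ = f₂ := by
      apply LinearMap.ext
      rintro ⟨w, hw⟩
      have hw' : w ∈ map E.mkQ (phiAux E P' W₁ f₁) := by
        rw [map_mkQ_phiAux E P' hP'E]; exact hw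
      obtain ⟨x, hx, rfl⟩ := hw'
      obtain ⟨hx1, hx2⟩ := (mem_phiAux E P').1 hx
      obtain ⟨hx1', hx2'⟩ := (mem_phiAux E P').1 (hab ▸ hx)
      exact hx2.symm.trans hx2'
    exact congrArg _ hf
  have hsurj : Function.Surjective ψ := by
    rintro ⟨P, hPd, hPE⟩
    set W : Submodule F (V ⧸ E) := map E.mkQ P with hWdef
    have hfr : finrank F ↥W + e = d := by
      have h1 := finrank_map_mkQ_add E P
      rw [hPE, ← hWdef] at h1; omega
    set ρ : ↥P →ₗ[F] ↥W := E.mkQ.restrict (fun x hx => Submodule.mem_map_of_mem hx) with hρ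
    have hρsurj : LinearMap.range ρ = ⊤ := by
      rw [LinearMap.range_eq_top]
      rintro ⟨w, hw⟩
      obtain ⟨x, hx, rfl⟩ := hw
      exact ⟨⟨x, hx⟩, Subtype.ext rfl⟩
    obtain ⟨σ, hσ⟩ := ρ.exists_rightInverse_of_surjective hρsurj
    set h' : ↥P →ₗ[F] (↥E ⧸ P'.comap E.subtype) :=
      (P'.comap E.subtype).mkQ ∘ₗ (alphaE E) ∘ₗ P.subtype with hh'
    set f := h' ∘ₗ σ with hf
    have key : ∀ p : ↥P, f (ρ p) = h' p := by
      intro p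
      set u : ↥P := σ (ρ p) - p with hu
      have hker : ρ u = 0 := by
        rw [hu, map_sub, show ρ (σ (ρ p)) = ρ p from DFunLike.congr_fun hσ (ρ p), sub_self]
      have hu0 : E.mkQ ↑u = 0 := congrArg Subtype.val hker
      have huE : (↑u : V) ∈ E := by
        rwa [Submodule.mkQ_apply, Submodule.Quotient.mk_eq_zero] at hu0
      have huP' : (↑u : V) ∈ P' := by
        rw [← hPE]; exact ⟨u.2, huE⟩
      have hαu : alphaE E ↑u = ⟨↑u, huE⟩ := by
        apply Subtype.ext
        rw [alphaE_apply, hu0, map_zero, sub_zero]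
      have hu' : h' u = 0 := by
        show (P'.comap E.subtype).mkQ (alphaE E ↑u) = 0
        rw [hαu, Submodule.mkQ_apply, Submodule.Quotient.mk_eq_zero]
        simpa using huP'
      have : σ (ρ p) = u + p := by rw [hu]; abel
      calc f (ρ p) = h' (σ (ρ p)) := rfl
        _ = h' (u + p) := by rw [this]
        _ = h' u + h' p := map_add _ _ _
        _ = h' p := by rw [hu', zero_add]
    have hle : P ≤ phiAux E P' W f := by
      intro x hx
      rw [mem_phiAux]
      refine ⟨Submodule.mem_map_of_mem hx, ?_⟩
      have h1 : (⟨E.mkQ x, Submodule.mem_map_of_mem hx⟩ : ↥W) = ρ ⟨x, hx⟩ := Subtype.ext rfl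
      rw [h1, key ⟨x, hx⟩]
      rfl
    have heq : phiAux E P' W f = P :=
      (eq_of_le_of_finrank_eq hle (by rw [finrank_phiAux E P' hP'E]; omega)).symm
    exact ⟨⟨⟨W, by omega⟩, f⟩, Subtype.ext heq⟩
  rw [← Nat.card_congr (Equiv.ofBijective ψ ⟨hinj, hsurj⟩)]
  haveI : ∀ (W : {W : Submodule F (V ⧸ E) // finrank F ↥W = d - e}),
      Finite (↥W.1 →ₗ[F] (↥E ⧸ P'.comap E.subtype)) :=
    fun W => Finite.of_injective _ DFunLike.coe_injective
  refine card_sigma_const _ _ (fun W => ?_)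
  rw [card_module (F := F) (↥W.1 →ₗ[F] (↥E ⧸ P'.comap E.subtype)), finrank_linearMap, W.2,
    finrank_quot_aux E P' hP'E]

theorem card_grass {F : Type} [Field F] [Fintype F] (n : ℕ) :
    ∀ {V : Type} [AddCommGroup V] [Module F V] [FiniteDimensional F V],
      finrank F V = n → ∀ k : ℕ,
        Nat.card {P : Submodule F V // finrank F ↥P = k} = gaussBinom (Fintype.card F) n k := by
  induction n with
  | zero =>
    intro V _ _ _ hV k
    haveI : Subsingleton V := (Module.finrank_zero_iff (R := F)).1 hV
    match k with
    | 0 =>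
      haveI : Subsingleton (Submodule F V) := inferInstance
      haveI : Unique {P : Submodule F V // finrank F ↥P = 0} :=
        ⟨⟨⟨⊥, finrank_bot F V⟩⟩, fun a => Subtype.ext (Subsingleton.elim _ _)⟩
      rw [Nat.card_unique, gaussBinom_zero_right]
    | j + 1 =>
      haveI : IsEmpty {P : Submodule F V // finrank F ↥P = j + 1} := by
        refine ⟨fun P => ?_⟩
        have h1 : finrank F ↥P.1 ≤ finrank F V := Submodule.finrank_le P.1
        omega
      rw [Nat.card_of_isEmpty, gaussBinom_eq_zero _ (by omega)]
  | succ m ih =>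
    intro V _ _ _ hV k
    haveI : Finite V := Module.finite_of_finite F
    match k with
    | 0 =>
      haveI : Unique {P : Submodule F V // finrank F ↥P = 0} :=
        ⟨⟨⟨⊥, finrank_bot F V⟩⟩, fun a => Subtype.ext (Submodule.finrank_eq_zero.1 a.2)⟩
      rw [Nat.card_unique, gaussBinom_zero_right]
    | i + 1 =>
      haveI : Nontrivial V := Module.nontrivial_of_finrank_pos (R := F) (by omega)
      obtain ⟨v, hv⟩ := exists_ne (0 : V)
      set L : Submodule F V := Submodule.span F {v} with hL
      have hLrk : finrank F ↥L = 1 := finrank_span_singleton hv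
      have hVL : finrank F (V ⧸ L) = m := by
        have := Submodule.finrank_quotient_add_finrank L
        omega
      have hdich : ∀ P : Submodule F V, ¬ (P ⊓ L = ⊥) → P ⊓ L = L := by
        intro P hP
        have h1 : finrank F ↥(P ⊓ L) ≤ 1 := hLrk ▸ Submodule.finrank_mono inf_le_right
        have h2 : finrank F ↥(P ⊓ L) ≠ 0 := fun h => hP (Submodule.finrank_eq_zero.1 h)
        exact eq_of_le_of_finrank_eq inf_le_right (by omega)
      rw [card_split (fun P : Submodule F V => finrank F ↥P = i + 1) (fun P => P ⊓ L = ⊥)]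
      have hc1 : Nat.card {P : Submodule F V // finrank F ↥P = i + 1 ∧ P ⊓ L = ⊥} =
          gaussBinom (Fintype.card F) m (i + 1) * Fintype.card F ^ (i + 1) := by
        have h := fiber_card L (⊥ : Submodule F V) bot_le
          (d := i + 1) (by rw [finrank_bot]; omega)
        rw [finrank_bot] at h
        rw [h]
        simp only [Nat.sub_zero]
        rw [ih hVL (i + 1), hLrk]
        norm_num
      have hc2 : Nat.card {P : Submodule F V // finrank F ↥P = i + 1 ∧ ¬ (P ⊓ L = ⊥)} =
          gaussBinom (Fintype.card F) m i := by
        have he : Nat.card {P : Submodule F V // finrank F ↥P = i + 1 ∧ ¬ (P ⊓ L = ⊥)} =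
            Nat.card {P : Submodule F V // finrank F ↥P = i + 1 ∧ L ≤ P} := by
          refine Nat.card_congr (Equiv.subtypeEquivRight fun P => ?_)
          constructor
          · rintro ⟨h1, h2⟩
            exact ⟨h1, inf_eq_right.1 (hdich P h2)⟩
          · rintro ⟨h1, h2⟩
            refine ⟨h1, fun hbot => ?_⟩
            rw [inf_eq_right.2 h2] at hbot
            rw [hbot] at hLrk
            rw [finrank_bot] at hLrk
            omega
        rw [he, card_sup_eq L (by omega), hLrk]
        simp only [Nat.add_sub_cancel]
        exact ih hVL i
      rw [hc1, hc2]
      show _ = gaussBinom (Fintype.card F) m i + _ * gaussBinom (Fintype.card F) m (i + 1)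
      ring

set_option maxHeartbeats 1600000 in
theorem chain_card {F : Type} [Field F] [Fintype F] (t : ℕ) (ht1 : 1 ≤ t) :
    ∀ {V : Type} [AddCommGroup V] [Module F V] [FiniteDimensional F V]
      (E : ℕ → Submodule F V) (k : ℕ → ℕ),
      E 0 = ⊤ → E t = ⊥ → (∀ i < t, E (i + 1) ≤ E i) → k t = 0 →
      (∀ i < t, k (i + 1) ≤ k i ∧
        k i - k (i + 1) ≤ finrank F ↥(E i) - finrank F ↥(E (i + 1))) →
      Nat.card {P : Submodule F V // ∀ i < t, finrank F ↥(P ⊓ E i) = k i} =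
        ∏ j ∈ Finset.range t,
          Fintype.card F ^ ((k j - k (j + 1)) * (finrank F ↥(E (j + 1)) - k (j + 1))) *
            gaussBinom (Fintype.card F) (finrank F ↥(E j) - finrank F ↥(E (j + 1)))
              (k j - k (j + 1)) := by
  induction t with
  | zero => omega
  | succ m ih =>
    intro V _ _ _ E k hE0 hEt hmono hkt hcond
    haveI : Finite V := Module.finite_of_finite F
    by_cases hm : m = 0
    · subst hm
      have heqv : {P : Submodule F V // ∀ i < 1, finrank F ↥(P ⊓ E i) = k i} ≃
          {P : Submodule F V // finrank F ↥P = k 0} := by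
        refine Equiv.subtypeEquivRight fun P => ?_
        constructor
        · intro h
          have h0 := h 0 one_pos
          rwa [hE0, inf_top_eq] at h0
        · intro h i hi
          have hi0 : i = 0 := by omega
          subst hi0
          rwa [hE0, inf_top_eq]
      rw [Nat.card_congr heqv, card_grass (finrank F V) rfl (k 0),
        Finset.prod_range_one, hEt, hkt, finrank_bot, hE0, finrank_top]
      simp
    · have hm1 : 1 ≤ m := by omega
      have hle : ∀ i j : ℕ, i ≤ j → j ≤ m + 1 → E j ≤ E i := by
        intro i j hij hj
        induction j with
        | zero =>
          have hi0 : i = 0 := by omega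
          subst hi0; exact le_rfl
        | succ a iha =>
          rcases Nat.lt_or_ge i (a + 1) with h | h
          · exact le_trans (hmono a (by omega)) (iha (by omega) (by omega))
          · have hia : i = a + 1 := by omega
            subst hia; exact le_rfl
      set E1 := E 1 with hE1def
      set E' : ℕ → Submodule F ↥E1 := fun i => comap E1.subtype (E (i + 1)) with hE'
      have hE'0 : E' 0 = ⊤ := Submodule.comap_subtype_self E1
      have hE'm : E' m = ⊥ := by
        simp only [hE', hEt, Submodule.comap_bot, Submodule.ker_subtype]
      have hE'mono : ∀ i < m, E' (i + 1) ≤ E' i := fun i hi =>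
        Submodule.comap_mono (hmono (i + 1) (by omega))
      have hfrE' : ∀ i ≤ m, finrank F ↥(E' i) = finrank F ↥(E (i + 1)) := fun i hi =>
        (Submodule.comapSubtypeEquivOfLe (hle 1 (i + 1) (by omega) (by omega))).finrank_eq
      obtain ⟨hk10, -⟩ := hcond 0 (by omega)
      have hk1 : ∀ P'' : Submodule F ↥E1, (∀ i < m, finrank F ↥(P'' ⊓ E' i) = k (i + 1)) →
          finrank F ↥P'' = k 1 := by
        intro P'' h
        have h0 := h 0 (by omega)
        rwa [hE'0, inf_top_eq] at h0
      have hmapinf : ∀ (P'' : Submodule F ↥E1) (a : ℕ), a < m →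
          map E1.subtype (P'' ⊓ E' a) = map E1.subtype P'' ⊓ E (a + 1) := by
        intro P'' a ha
        rw [Submodule.map_inf _ (Submodule.injective_subtype E1)]
        simp only [hE']
        rw [Submodule.map_comap_eq, Submodule.range_subtype,
          inf_eq_right.2 (hle 1 (a + 1) (by omega) (by omega))]
      set ψ : {P : Submodule F V // ∀ i < m + 1, finrank F ↥(P ⊓ E i) = k i} →
          Σ P'' : {P'' : Submodule F ↥E1 // ∀ i < m, finrank F ↥(P'' ⊓ E' i) = k (i + 1)},
            {P : Submodule F V // finrank F ↥P = k 0 ∧ P ⊓ E1 = map E1.subtype P''.1} :=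
        fun P => ⟨⟨comap E1.subtype (P.1 ⊓ E1), by
            intro i hi
            have hX : P.1 ⊓ E1 ⊓ E (i + 1) = P.1 ⊓ E (i + 1) := by
              rw [inf_assoc, inf_eq_right.2 (hle 1 (i + 1) (by omega) (by omega))]
            try simp only [hE']
            rw [← Submodule.comap_inf, hX, finrank_comap_subtype,
              inf_eq_left.2 (le_trans inf_le_right (hle 1 (i + 1) (by omega) (by omega)))]
            exact P.2 (i + 1) (by omega)⟩, ⟨P.1, by
            constructor
            · have h0 := P.2 0 (by omega)
              rwa [hE0, inf_top_eq] at h0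
            · rw [Submodule.map_comap_eq, Submodule.range_subtype,
                inf_eq_right.2 inf_le_right]⟩⟩ with hψdef
      have hbij : Function.Bijective ψ := by
        constructor
        · intro a b hab
          apply Subtype.ext
          exact congrArg (fun x => (x.2.1 : Submodule F V)) hab
        · rintro ⟨⟨P'', hP''⟩, ⟨P, hP⟩⟩
          have h1 : comap E1.subtype (P ⊓ E1) = P'' := by
            rw [hP.2, Submodule.comap_map_eq, Submodule.ker_subtype, sup_bot_eq]
          refine ⟨⟨P, ?_⟩, ?_⟩
          · intro i hi
            match i with
            | 0 =>
              rw [hE0, inf_top_eq]; exact hP.1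
            | a + 1 =>
              have hXa : P ⊓ E (a + 1) = map E1.subtype P'' ⊓ E (a + 1) := by
                rw [← hP.2, inf_assoc, inf_eq_right.2 (hle 1 (a + 1) (by omega) (by omega))]
              rw [hXa, ← hmapinf P'' a (by omega), finrank_map_subtype_eq]
              exact hP'' a (by omega)
          · subst h1
            rfl
      have hquot : finrank F (V ⧸ E1) = finrank F ↥(E 0) - finrank F ↥E1 := by
        have h1 := Submodule.finrank_quotient_add_finrank E1
        rw [hE0, finrank_top]
        omega
      set C := Fintype.card F ^ ((k 0 - k 1) * (finrank F ↥E1 - k 1)) *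
        gaussBinom (Fintype.card F) (finrank F ↥(E 0) - finrank F ↥E1) (k 0 - k 1) with hC
      have hfib : ∀ P'' : {P'' : Submodule F ↥E1 //
            ∀ i < m, finrank F ↥(P'' ⊓ E' i) = k (i + 1)},
          Nat.card {P : Submodule F V //
            finrank F ↥P = k 0 ∧ P ⊓ E1 = map E1.subtype P''.1} = C := by
        intro P''
        have hfrP'' : finrank F ↥(map E1.subtype P''.1) = k 1 := by
          rw [finrank_map_subtype_eq]; exact hk1 P''.1 P''.2
        have h := fiber_card E1 (map E1.subtype P''.1) (Submodule.map_subtype_le E1 P''.1)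
          (d := k 0) (by rw [hfrP'']; exact hk10)
        rw [hfrP''] at h
        rw [h, card_grass (finrank F (V ⧸ E1)) rfl (k 0 - k 1), hquot, hC, mul_comm]
      rw [Nat.card_congr (Equiv.ofBijective ψ hbij), card_sigma_const _ C hfib]
      have hinner := ih hm1 E' (fun i => k (i + 1)) hE'0 hE'm hE'mono hkt
        (fun i hi => by
          obtain ⟨h1, h2⟩ := hcond (i + 1) (by omega)
          rw [hfrE' i (by omega), hfrE' (i + 1) (by omega)]
          exact ⟨h1, h2⟩)
      rw [hinner, Finset.prod_range_succ']
      congr 1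
      · refine Finset.prod_congr rfl fun j hj => ?_
        have hj' : j < m := Finset.mem_range.1 hj
        rw [hfrE' j (by omega), hfrE' (j + 1) (by omega)]

theorem chain_exists {F : Type} [Field F] [Fintype F] {V : Type} [AddCommGroup V] [Module F V]
    [FiniteDimensional F V] (t : ℕ) (ht1 : 1 ≤ t) (E : ℕ → Submodule F V) (k : ℕ → ℕ)
    (hE0 : E 0 = ⊤) (hEt : E t = ⊥) (hmono : ∀ i < t, E (i + 1) ≤ E i) (hkt : k t = 0) :
    (∃ P : Submodule F V, ∀ i < t, finrank F ↥(P ⊓ E i) = k i) ↔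
      (∀ i < t, k (i + 1) ≤ k i ∧
        k i - k (i + 1) ≤ finrank F ↥(E i) - finrank F ↥(E (i + 1))) := by
  haveI : Finite V := Module.finite_of_finite F
  constructor
  · rintro ⟨P, hP⟩ i hi
    have hext : ∀ j ≤ t, finrank F ↥(P ⊓ E j) = k j := by
      intro j hj
      rcases Nat.lt_or_ge j t with h | h
      · exact hP j h
      · have hjt : j = t := by omega
        subst hjt
        rw [hEt, inf_bot_eq, hkt, finrank_bot]
    constructor
    · rw [← hext i (by omega), ← hext (i + 1) (by omega)]
      exact Submodule.finrank_mono (inf_le_inf_left P (hmono i hi))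
    · have h1 := finrank_map_mkQ_add (E (i + 1)) (P ⊓ E i)
      have h2 := finrank_map_mkQ_add (E (i + 1)) (E i)
      have hXa : P ⊓ E i ⊓ E (i + 1) = P ⊓ E (i + 1) := by
        rw [inf_assoc, inf_eq_right.2 (hmono i hi)]
      have hXb : E i ⊓ E (i + 1) = E (i + 1) := inf_eq_right.2 (hmono i hi)
      rw [hXa] at h1
      rw [hXb] at h2
      have h3 : finrank F ↥(map (E (i + 1)).mkQ (P ⊓ E i)) ≤
          finrank F ↥(map (E (i + 1)).mkQ (E i)) :=
        Submodule.finrank_mono (Submodule.map_mono inf_le_right)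
      rw [hext i (by omega), hext (i + 1) (by omega)] at h1
      omega
  · intro hcond
    have hcard := chain_card t ht1 E k hE0 hEt hmono hkt hcond
    have hpos : 0 < Nat.card {P : Submodule F V // ∀ i < t, finrank F ↥(P ⊓ E i) = k i} := by
      rw [hcard]
      refine Finset.prod_pos fun j hj => ?_
      refine Nat.mul_pos (pow_pos Fintype.card_pos _) (gaussBinom_pos _ ?_)
      exact (hcond j (Finset.mem_range.1 hj)).2
    obtain ⟨⟨P, hP⟩⟩ := (Nat.card_pos_iff.1 hpos).1
    exact ⟨P, hP⟩

section
variable (F : Type) [Field F]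

theorem lastSpan_eq (N c : ℕ) :
    lastSpan F N c =
      Submodule.span F (Set.range fun j : {j : Fin N // c ≤ (j : ℕ)} => (Pi.single j.1 (1 : F) : Fin N → F)) := by
  unfold lastSpan
  congr 1
  ext v
  constructor
  · rintro ⟨j, hj, rfl⟩
    exact ⟨⟨j, hj⟩, rfl⟩
  · rintro ⟨⟨j, hj⟩, rfl⟩
    exact ⟨j, hj, rfl⟩

def finEquivAux (N c : ℕ) : {j : Fin N // c ≤ (j : ℕ)} ≃ Fin (N - c) where
  toFun j := ⟨(j.1 : ℕ) - c, by have := j.1.isLt; have := j.2; omega⟩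
  invFun i := ⟨⟨c + i.1, by have := i.isLt; omega⟩, by simp⟩
  left_inv j := by
    apply Subtype.ext
    apply Fin.ext
    have := j.2
    simp only
    omega
  right_inv i := by
    apply Fin.ext
    simp only
    omega

theorem finrank_lastSpan (N c : ℕ) (h : c ≤ N) :
    finrank F ↥(lastSpan F N c) = N - c := by
  rw [lastSpan_eq]
  have hli : LinearIndependent F (fun j : {j : Fin N // c ≤ (j : ℕ)} => (Pi.single j.1 (1 : F) : Fin N → F)) := by
    have h1 := (Pi.basisFun F (Fin N)).linearIndependent.comp
      (Subtype.val : {j : Fin N // c ≤ (j : ℕ)} → Fin N) Subtype.val_injective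
    have h2 : (fun j : {j : Fin N // c ≤ (j : ℕ)} => (Pi.basisFun F (Fin N)) j.1) =
        fun j : {j : Fin N // c ≤ (j : ℕ)} => (Pi.single j.1 (1 : F) : Fin N → F) := by
      funext j
      rw [Pi.basisFun_apply]
    rwa [← h2]
  rw [finrank_span_eq_card hli, Fintype.card_congr (finEquivAux N c), Fintype.card_fin]

theorem lastSpan_mono (N : ℕ) {c c' : ℕ} (h : c ≤ c') : lastSpan F N c' ≤ lastSpan F N c := by
  refine Submodule.span_mono ?_
  rintro v ⟨j, hj, rfl⟩
  exact ⟨j, le_trans h hj, rfl⟩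

theorem lastSpan_zero (N : ℕ) : lastSpan F N 0 = ⊤ := by
  refine top_unique ?_
  rw [← (Pi.basisFun F (Fin N)).span_eq]
  refine Submodule.span_mono ?_
  rintro v ⟨j, rfl⟩
  exact ⟨j, Nat.zero_le _, by rw [Pi.basisFun_apply]⟩

theorem lastSpan_bot (N : ℕ) : lastSpan F N N = ⊥ := by
  unfold lastSpan
  have h : {v : Fin N → F | ∃ j : Fin N, N ≤ (j : ℕ) ∧ v = Pi.single j 1} = ∅ := by
    ext v
    simp only [Set.mem_setOf_eq, Set.mem_empty_iff_false, iff_false, not_exists]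
    rintro j ⟨hj, -⟩
    exact absurd j.isLt (by omega)
  rw [h, Submodule.span_empty]

end

set_option maxHeartbeats 1600000 in
/-- Existence criterion and count for subspaces of type `(k 0, …, k (t-1))`. -/
theorem stmt7 {F : Type} [Field F] [Fintype F] (q t : ℕ) (ht : 1 ≤ t) (n k : ℕ → ℕ)
    (hq : Fintype.card F = q) :
    ((∃ P, IsTypeP F t n k P) ↔
      ((∀ i < t - 1, k (i + 1) ≤ k i ∧ k i - k (i + 1) ≤ n i) ∧ k (t - 1) ≤ n (t - 1))) ∧
    (((∀ i < t - 1, k (i + 1) ≤ k i ∧ k i - k (i + 1) ≤ n i) ∧ k (t - 1) ≤ n (t - 1)) →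
      Nat.card {P // IsTypeP F t n k P} =
        gaussBinom q (n (t - 1)) (k (t - 1)) *
          ∏ j ∈ Finset.range (t - 1),
            q ^ ((k j - k (j + 1)) * ((∑ m ∈ Finset.Ico (j + 1) t, n m) - k (j + 1))) *
              gaussBinom q (n j) (k j - k (j + 1))) := by
  subst hq
  classical
  set N : ℕ := ∑ m ∈ Finset.range t, n m with hN
  set c : ℕ → ℕ := fun i => ∑ j ∈ Finset.range i, n j with hc
  set E : ℕ → Submodule F (Fin N → F) := fun i => lastSpan F N (c i) with hE
  set k' : ℕ → ℕ := fun i => if i < t then k i else 0 with hk'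
  have hcle : ∀ i ≤ t, c i ≤ N := fun i hi => by
    rw [hc, hN]
    exact Finset.sum_le_sum_of_subset (Finset.range_subset_range.2 hi)
  have hE0 : E 0 = ⊤ := by
    simp only [hE, hc, Finset.range_zero, Finset.sum_empty]
    exact lastSpan_zero F N
  have hEt : E t = ⊥ := by
    simp only [hE, hc]
    rw [← hN]
    exact lastSpan_bot F N
  have hmono : ∀ i < t, E (i + 1) ≤ E i := fun i hi => by
    simp only [hE]
    exact lastSpan_mono F N (by
      simp only [hc]
      exact Finset.sum_le_sum_of_subset (Finset.range_subset_range.2 (Nat.le_succ i)))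
  have hfr : ∀ i ≤ t, finrank F ↥(E i) = N - c i := fun i hi =>
    finrank_lastSpan F N (c i) (hcle i hi)
  have hkt' : k' t = 0 := if_neg (by omega)
  have hdiff : ∀ i < t, finrank F ↥(E i) - finrank F ↥(E (i + 1)) = n i := by
    intro i hi
    rw [hfr i (by omega), hfr (i + 1) (by omega)]
    have h1 : c (i + 1) = c i + n i := Finset.sum_range_succ n i
    have h2 := hcle (i + 1) (by omega)
    omega
  have hIco : ∀ j, j + 1 ≤ t → finrank F ↥(E (j + 1)) = ∑ m ∈ Finset.Ico (j + 1) t, n m := by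
    intro j hj
    have h1 := Finset.sum_range_add_sum_Ico n hj
    rw [hfr (j + 1) hj]
    have h2 := hcle (j + 1) hj
    simp only [hc] at *
    omega
  have hpred : ∀ P : Submodule F (Fin N → F),
      IsTypeP F t n k P ↔ ∀ i < t, finrank F ↥(P ⊓ E i) = k' i := by
    intro P
    constructor
    · rintro ⟨h0, hrest⟩ i hi
      simp only [hk', if_pos hi]
      match i with
      | 0 =>
        rw [hE0, inf_top_eq]
        exact h0
      | a + 1 =>
        exact hrest (a + 1) (by omega) hi
    · intro h
      constructor
      · have h0 := h 0 (by omega)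
        rw [hE0, inf_top_eq] at h0
        simpa only [hk', if_pos (show 0 < t by omega)] using h0
      · intro i h1i hit
        have hi := h i hit
        simp only [hk', if_pos hit] at hi
        exact hi
  have hcond_iff : (∀ i < t, k' (i + 1) ≤ k' i ∧
        k' i - k' (i + 1) ≤ finrank F ↥(E i) - finrank F ↥(E (i + 1))) ↔
      ((∀ i < t - 1, k (i + 1) ≤ k i ∧ k i - k (i + 1) ≤ n i) ∧ k (t - 1) ≤ n (t - 1)) := by
    constructor
    · intro hcd
      constructor
      · intro i hi
        have h1 := hcd i (by omega)
        rw [hdiff i (by omega)] at h1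
        simpa only [hk', if_pos (show i < t by omega), if_pos (show i + 1 < t by omega)] using h1
      · have h1 := hcd (t - 1) (by omega)
        rw [hdiff (t - 1) (by omega)] at h1
        simp only [hk', if_pos (show t - 1 < t by omega),
          if_neg (show ¬ (t - 1 + 1 < t) by omega)] at h1
        omega
    · rintro ⟨h1, h2⟩ i hi
      rw [hdiff i hi]
      rcases Nat.lt_or_ge i (t - 1) with h | h
      · have := h1 i h
        simpa only [hk', if_pos (show i < t by omega), if_pos (show i + 1 < t by omega)]
          using this
      · have hi' : i = t - 1 := by omega
        subst hi'
        simp only [hk', if_pos (show t - 1 < t by omega),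
          if_neg (show ¬ (t - 1 + 1 < t) by omega)]
        omega
  constructor
  · rw [exists_congr hpred, chain_exists t ht E k' hE0 hEt hmono hkt']
    exact hcond_iff
  · intro hrhs
    have hcd := hcond_iff.2 hrhs
    rw [Nat.card_congr (Equiv.subtypeEquivRight hpred),
      chain_card t ht E k' hE0 hEt hmono hkt' hcd]
    conv_lhs => rw [show t = t - 1 + 1 by omega, Finset.prod_range_succ]
    have htt : t - 1 + 1 = t := by omega
    rw [htt]
    have hlastf : Fintype.card F ^ ((k' (t - 1) - k' t) * (finrank F ↥(E t) - k' t)) *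
        gaussBinom (Fintype.card F) (finrank F ↥(E (t - 1)) - finrank F ↥(E t))
          (k' (t - 1) - k' t) =
        gaussBinom (Fintype.card F) (n (t - 1)) (k (t - 1)) := by
      have hA : finrank F ↥(E t) = 0 := by rw [hEt]; exact finrank_bot F _
      have hB : finrank F ↥(E (t - 1)) - finrank F ↥(E t) = n (t - 1) := by
        have h9 := hdiff (t - 1) (by omega)
        rwa [htt] at h9
      rw [hkt', hB, hA]
      simp [hk', show t - 1 < t by omega]
    rw [hlastf, mul_comm]
    congr 1
    refine Finset.prod_congr rfl fun j hj => ?_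
    have hj' : j < t - 1 := Finset.mem_range.1 hj
    rw [hdiff j (by omega), hIco j (by omega)]
    simp only [hk', if_pos (show j < t by omega), if_pos (show j + 1 < t by omega)]
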